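/- Encoding rooted unordered t-labelled trees of height ≤ i+1 as pairs (root label-set, function from limb-isomorphism-classes to multiplicities bounded by f(i)): this encoding is injective on l-isomorphism classes. Formally, if two such trees have equal root label-set and for every l-isomorphism class C of trees of height ≤ i the same number of limbs in class C, then the trees are l-isomorphic. -/

import Mathlib

/-- A rooted unordered `t`-labelled tree: each node carries a set of labels
from a fixed set of `t` labels, and a list of children (limbs). -/
inductive LTree (t : ℕ) : Type
  | node (label : Finset (Fin t)) (children : List (LTree t)) : LTree t

namespace LTree

mutual
  /-- Height of a rooted tree (a single node has height 0). -/
  def height {t : ℕ} : LTree t → ℕ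
    | .node _ cs => heightList cs
  /-- Auxiliary: `heightList cs` = max over `c ∈ cs` of `height c + 1`. -/
  def heightList {t : ℕ} : List (LTree t) → ℕ
    | [] => 0
    | c :: cs => max (height c + 1) (heightList cs)
end

mutual
  /-- Number of nodes of a rooted tree. -/
  def size {t : ℕ} : LTree t → ℕ
    | .node _ cs => 1 + sizeList cs
  def sizeList {t : ℕ} : List (LTree t) → ℕ
    | [] => 0
    | c :: cs => size c + sizeList cs
end

/-- l-isomorphism of rooted labelled trees: a root- and label-preserving
isomorphism (children are unordered). -/
inductive LIso {t : ℕ} : LTree t → LTree t → Prop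
  | node (a : Finset (Fin t)) (cs ds ds' : List (LTree t)) :
      List.Forall₂ LIso cs ds' → List.Perm ds' ds →
      LIso (.node a cs) (.node a ds)

open scoped Classical in
/-- The number of members of `cs` l-isomorphic to `c`. -/
noncomputable def limbCount {t : ℕ} (c : LTree t) (cs : List (LTree t)) : ℕ :=
  cs.countP fun d => decide (LIso c d)

/-- `ReducedB f i T`: the tree `T`, regarded as a tree of height ≤ i, is
f-reduced: at every node at level j+1 each l-isomorphism class of its limbs
occurs at most f(j) times. -/
def ReducedB {t : ℕ} (f : ℕ → ℕ) : ℕ → LTree t → Prop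
  | 0, _ => True
  | i + 1, .node _ cs =>
      (∀ c ∈ cs, ReducedB f i c) ∧ ∀ c ∈ cs, limbCount c cs ≤ f i

lemma le_sizeList {t : ℕ} {c : LTree t} {cs : List (LTree t)} (h : c ∈ cs) :
    size c ≤ sizeList cs := by
  induction cs with
  | nil => cases h
  | cons d cs ih =>
    rcases List.mem_cons.1 h with rfl | h
    · simp [sizeList]
    · have := ih h; simp [sizeList]; omega

lemma size_lt {t : ℕ} {c : LTree t} {a : Finset (Fin t)} {cs : List (LTree t)}
    (h : c ∈ cs) : size c < size (LTree.node a cs) := by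
  have := le_sizeList h
  simp only [size]; omega

lemma forall₂_imp_mem {α β : Type*} {R S : α → β → Prop} :
    ∀ {l₁ : List α} {l₂ : List β}, List.Forall₂ R l₁ l₂ →
      (∀ a ∈ l₁, ∀ b, R a b → S a b) → List.Forall₂ S l₁ l₂ := by
  intro l₁ l₂ h
  induction h with
  | nil => intro; exact List.Forall₂.nil
  | cons hab _ ih =>
    intro hm
    exact List.Forall₂.cons (hm _ (List.mem_cons_self) _ hab)
      (ih fun a ha b => hm a (List.mem_cons_of_mem _ ha) b)

lemma forall₂_trans_mem {α β γ : Type*} {R : α → β → Prop} {S : β → γ → Prop}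
    {T : α → γ → Prop} :
    ∀ {l₁ : List α} {l₂ : List β} {l₃ : List γ}, List.Forall₂ R l₁ l₂ →
      List.Forall₂ S l₂ l₃ →
      (∀ a ∈ l₁, ∀ b c, R a b → S b c → T a c) → List.Forall₂ T l₁ l₃ := by
  intro l₁ l₂ l₃ h
  induction h generalizing l₃ with
  | nil => intro h2 _; cases h2; exact List.Forall₂.nil
  | cons hab _ ih =>
    intro h2 hm
    cases h2 with
    | cons hbc h2' =>
      exact List.Forall₂.cons (hm _ (List.mem_cons_self) _ _ hab hbc)
        (ih h2' fun a ha b c => hm a (List.mem_cons_of_mem _ ha) b c)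

lemma liso_refl_aux {t : ℕ} : ∀ n (T : LTree t), size T ≤ n → LIso T T := by
  intro n
  induction n with
  | zero => intro T h; cases T with | node a cs => simp [size] at h
  | succ n ih =>
    intro T h
    cases T with
    | node a cs =>
      refine LIso.node a cs cs cs ?_ (List.Perm.refl _)
      refine List.forall₂_same.2 fun c hc => ih c ?_
      have := size_lt (a := a) hc
      omega

lemma liso_refl {t : ℕ} (T : LTree t) : LIso T T := liso_refl_aux (size T) T le_rfl

lemma liso_symm_aux {t : ℕ} : ∀ n (T U : LTree t), size T ≤ n → LIso T U → LIso U T := by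
  intro n
  induction n with
  | zero => intro T _ h; cases T with | node a cs => simp [size] at h
  | succ n ih =>
    intro T U hs h
    cases h with
    | node a cs ds ds' hf hp =>
      have hf' : List.Forall₂ LIso ds' cs := by
        refine List.Forall₂.flip (forall₂_imp_mem hf ?_)
        intro c hc d hcd
        refine ih c d ?_ hcd
        have h2 := size_lt (a := a) hc
        simp only [size] at hs h2; omega
      obtain ⟨m, hm1, hm2⟩ := List.perm_comp_forall₂ hp.symm hf'
      exact LIso.node a ds cs m hm1 hm2

lemma liso_symm {t : ℕ} {T U : LTree t} (h : LIso T U) : LIso U T :=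
  liso_symm_aux (size T) T U le_rfl h

lemma liso_trans_aux {t : ℕ} :
    ∀ n (T U V : LTree t), size T ≤ n → LIso T U → LIso U V → LIso T V := by
  intro n
  induction n with
  | zero => intro T _ _ h; cases T with | node a cs => simp [size] at h
  | succ n ih =>
    intro T U V hs h1 h2
    cases h1 with
    | node a cs ds ds' hf1 hp1 =>
      cases h2 with
      | node _ _ es es' hf2 hp2 =>
        obtain ⟨m, hm1, hm2⟩ := List.perm_comp_forall₂ hp1 hf2
        have hf : List.Forall₂ LIso cs m := by
          refine forall₂_trans_mem hf1 hm1 ?_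
          intro c hc b e hcb hbe
          refine ih c b e ?_ hcb hbe
          have h2 := size_lt (a := a) hc
          simp only [size] at hs h2; omega
        exact LIso.node a cs es m hf (hm2.trans hp2)

lemma liso_trans {t : ℕ} {T U V : LTree t} (h1 : LIso T U) (h2 : LIso U V) : LIso T V :=
  liso_trans_aux (size T) T U V le_rfl h1 h2

end LTree

open LTree in
/-- Injectivity of the encoding of trees of height ≤ i+1 by (root label-set,
multiplicity of each l-isomorphism class of limbs of height ≤ i): if two such
trees have the same root label-set and, for every tree C of height ≤ i, the
same number of limbs l-isomorphic to C, then they are l-isomorphic. -/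
theorem stmt9 (t i : ℕ) (a b : Finset (Fin t)) (cs ds : List (LTree t))
    (hcs : ∀ c ∈ cs, height c ≤ i) (hds : ∀ d ∈ ds, height d ≤ i)
    (hlab : a = b)
    (hcount : ∀ C : LTree t, height C ≤ i → limbCount C cs = limbCount C ds) :
    LIso (.node a cs) (.node b ds) := by
  classical
  subst hlab

  have key : ∀ n (cs ds : List (LTree t)), cs.length ≤ n →
      (∀ c ∈ cs, height c ≤ i) → (∀ d ∈ ds, height d ≤ i) →
      (∀ C : LTree t, height C ≤ i → limbCount C cs = limbCount C ds) →
      LIso (.node a cs) (.node a ds) := by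
    intro n
    induction n with
    | zero =>
      intro cs ds hlen hcs hds hcount
      have hcnil : cs = [] := List.length_eq_zero_iff.1 (Nat.le_zero.1 hlen)
      subst hcnil
      have hd : ds = [] := by
        refine List.eq_nil_iff_forall_not_mem.2 fun d hd => ?_
        have h1 : limbCount d [] = limbCount d ds := hcount d (hds d hd)
        have h2 : 0 < limbCount d ds := by
          refine List.countP_pos_iff.2 ⟨d, hd, ?_⟩
          simp [liso_refl]
        rw [← h1] at h2
        simp [limbCount] at h2
      subst hd
      exact LIso.node a [] [] [] List.Forall₂.nil (List.Perm.refl _)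
    | succ n IH =>
      intro cs ds hlen hcs hds hcount
      cases cs with
      | nil =>
        have hd : ds = [] := by
          refine List.eq_nil_iff_forall_not_mem.2 fun d hd => ?_
          have h1 : limbCount d [] = limbCount d ds := hcount d (hds d hd)
          have h2 : 0 < limbCount d ds := by
            refine List.countP_pos_iff.2 ⟨d, hd, ?_⟩
            simp [liso_refl]
          rw [← h1] at h2
          simp [limbCount] at h2
        subst hd
        exact LIso.node a [] [] [] List.Forall₂.nil (List.Perm.refl _)
      | cons c cs' =>
        have hcc : 0 < limbCount c (c :: cs') := by
          refine List.countP_pos_iff.2 ⟨c, List.mem_cons_self, ?_⟩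
          simp [liso_refl]
        have hcd : 0 < limbCount c ds := by
          rw [← hcount c (hcs c (List.mem_cons_self))]; exact hcc
        obtain ⟨d, hdmem, hcdiso⟩ := List.countP_pos_iff.1 hcd
        have hcdiso : LIso c d := by simpa using hcdiso
        have hperm : ds.Perm (d :: ds.erase d) := List.perm_cons_erase hdmem
        have hiff : ∀ C : LTree t, (LIso C c ↔ LIso C d) :=
          fun C => ⟨fun h => liso_trans h hcdiso, fun h => liso_trans h (liso_symm hcdiso)⟩
        have hcount' : ∀ C : LTree t, height C ≤ i →
            limbCount C cs' = limbCount C (ds.erase d) := by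
          intro C hC
          have h1 := hcount C hC
          have h2 : limbCount C ds = limbCount C (d :: ds.erase d) := hperm.countP_eq _
          simp only [limbCount, List.countP_cons] at h1 h2
          by_cases hC1 : LIso C c
          · have hC2 : LIso C d := (hiff C).1 hC1
            simp [limbCount, hC1, hC2] at h1 h2 ⊢
            omega
          · have hC2 : ¬ LIso C d := fun h => hC1 ((hiff C).2 h)
            simp [limbCount, hC1, hC2] at h1 h2 ⊢
            omega
        have hIH := IH cs' (ds.erase d) (by simp at hlen; omega)
          (fun x hx => hcs x (List.mem_cons_of_mem _ hx))
          (fun x hx => hds x (List.mem_of_mem_erase hx)) hcount'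
        cases hIH with
        | node _ _ _ es hf hp =>
          refine LIso.node a (c :: cs') ds (d :: es) (List.Forall₂.cons hcdiso hf) ?_
          exact (hp.cons d).trans hperm.symm
  exact key cs.length cs ds le_rfl hcs hds hcount
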